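/- Assume the pre-diffeo-valued field structure is dense, and set I := Q ∩ M. Then the lattice of Q-submodules of K (K viewed as a Q-module) has cube rank exactly 2; explicitly: (i) whenever A, B₁, B₂, B₃ are Q-submodules of K with A ⊆ Bᵢ and A ≠ Bᵢ for i = 1, 2, 3, there exists i ∈ {1,2,3} such that Bᵢ ∩ (Bⱼ + Bₗ) ≠ A, where {j, l} = {1,2,3} \ {i}; and (ii) there exist Q-submodules N₁, N₂ of K with N₁ ∩ N₂ = I, N₁ + N₂ = R, I ≠ N₁ ≠ R and I ≠ N₂ ≠ R. -/

import Mathlib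

def AlgebraicOverPrime (p : ℕ) {K : Type*} [Field K] [CharP K p] (q : K) : Prop :=
  ∃ f : Polynomial (ZMod p), f ≠ 0 ∧ Polynomial.eval₂ (ZMod.castHom dvd_rfl K) q f = 0

structure PreDiffeoValued (p : ℕ) (K : Type*) [Field K]
    (Γ : Type*) [AddCommGroup Γ] [LinearOrder Γ] [IsOrderedAddMonoid Γ]
    (k : Type*) [Field k] (D : Type*) [AddCommGroup D] where
  v : K → WithTop Γ
  v_surj : ∀ γ : Γ, ∃ x : K, v x = (γ : WithTop Γ)
  v_eq_top_iff : ∀ x : K, v x = ⊤ ↔ x = 0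
  v_mul : ∀ x y : K, v (x * y) = v x + v y
  v_add : ∀ x y : K, min (v x) (v y) ≤ v (x + y)
  O : Subring K
  mem_O_iff : ∀ x : K, x ∈ O ↔ 0 ≤ v x
  res : K → k
  res_add : ∀ x ∈ O, ∀ y ∈ O, res (x + y) = res x + res y
  res_mul : ∀ x ∈ O, ∀ y ∈ O, res (x * y) = res x * res y
  res_one : res 1 = 1
  res_surjective : ∀ z : k, ∃ x ∈ O, res x = z
  res_eq_zero_iff : ∀ x ∈ O, (res x = 0 ↔ 0 < v x)
  smul : K → D → D
  smul_add : ∀ a ∈ O, ∀ x y : D, smul a (x + y) = smul a x + smul a y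
  add_smul : ∀ a ∈ O, ∀ b ∈ O, ∀ x : D, smul (a + b) x = smul a x + smul b x
  mul_smul : ∀ a ∈ O, ∀ b ∈ O, ∀ x : D, smul (a * b) x = smul a (smul b x)
  one_smul : ∀ x : D, smul 1 x = x
  divisible : ∀ a ∈ O, a ≠ 0 → ∀ y : D, ∃ x : D, smul a x = y
  total : ∀ x y : D, (∃ a ∈ O, x = smul a y) ∨ (∃ a ∈ O, y = smul a x)
  phi : k → D
  phi_add : ∀ z w : k, phi (z + w) = phi z + phi w
  phi_injective : Function.Injective phi
  phi_smul : ∀ a ∈ O, ∀ z : k, phi (res a * z) = smul a (phi z)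
  R : Subring K
  R_le_O : (R : Set K) ⊆ (O : Set K)
  d : K → k
  d_add : ∀ x ∈ R, ∀ y ∈ R, d (x + y) = d x + d y
  d_leibniz : ∀ x ∈ R, ∀ y ∈ R, d (x * y) = res x * d y + res y * d x
  d_surjective : ∀ z : k, ∃ x ∈ R, d x = z
  pi : K → D
  pi_add : ∀ x ∈ O, ∀ y ∈ O, pi (x + y) = pi x + pi y
  pi_qsmul : ∀ q ∈ R, d q = 0 → ∀ x ∈ O, pi (q * x) = smul q (pi x)
  pi_surjective : ∀ y : D, ∃ x ∈ O, pi x = y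
  pi_eq_zero_iff : ∀ x ∈ O, (pi x = 0 ↔ x ∈ R ∧ d x = 0)
  pi_eq_phi_d : ∀ x ∈ R, pi x = phi (d x)
  char_two_sq : p = 2 → ∀ a ∈ O, a ^ 2 ∈ R ∧ d (a ^ 2) = 0
  char_odd_pi : p ≠ 2 → ∀ a ∈ O, ∀ b ∈ O, pi (a * b) = smul a (pi b) + smul b (pi a)

/-- A pre-diffeo-valued field structure together with the secondary valuation
`val : D → Γ ∪ {∞}`. -/
structure PreDiffeoValuedS (p : ℕ) (K : Type*) [Field K]
    (Γ : Type*) [AddCommGroup Γ] [LinearOrder Γ] [IsOrderedAddMonoid Γ]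
    (k : Type*) [Field k] (D : Type*) [AddCommGroup D]
    extends PreDiffeoValued p K Γ k D where
  val : D → WithTop Γ
  val_nonpos_or_top : ∀ x : D, val x ≤ 0 ∨ val x = ⊤
  val_eq_top_iff : ∀ x : D, val x = ⊤ ↔ x = 0
  val_nonneg_iff : ∀ x : D, 0 ≤ val x ↔ ∃ z : k, phi z = x
  val_smul_of_nonpos : ∀ a ∈ O, ∀ x : D, v a + val x ≤ 0 → val (smul a x) = v a + val x
  val_smul_of_pos : ∀ a ∈ O, ∀ x : D, 0 < v a + val x → val (smul a x) = ⊤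
  val_add : ∀ x y : D, min (val x) (val y) ≤ val (x + y)
  smul_of_val_le : ∀ x y : D, val x ≤ val y → ∃ a ∈ O, y = smul a x
  smul_of_val_lt : ∀ x y : D, val x < val y → ∃ a : K, 0 < v a ∧ y = smul a x
  val_unbounded : ∀ γ : Γ, ∃ x : D, val x ≤ (γ : WithTop Γ)

namespace PreDiffeoValued
variable {p : ℕ} {K : Type*} [Field K] {Γ : Type*} [AddCommGroup Γ] [LinearOrder Γ] [IsOrderedAddMonoid Γ]
  {k : Type*} [Field k] {D : Type*} [AddCommGroup D]

def Q (P : PreDiffeoValued p K Γ k D) : Set K := {x | x ∈ P.R ∧ P.d x = 0}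

def IsDense (P : PreDiffeoValued p K Γ k D) : Prop :=
  ∀ a ∈ P.O, ∀ γ : Γ, ∃ q ∈ P.Q, (γ : WithTop Γ) < P.v (a - q)

end PreDiffeoValued

open Pointwise

/-- `N` is a `Q`-submodule of `K`, where `Q ⊆ K` acts by multiplication. -/
def IsQSubmodule {K : Type*} [Field K] (Q : Set K) (N : Set K) : Prop :=
  (0 : K) ∈ N ∧ (∀ x ∈ N, ∀ y ∈ N, x + y ∈ N) ∧ (∀ x ∈ N, -x ∈ N) ∧
    ∀ q ∈ Q, ∀ x ∈ N, q * x ∈ N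


section Aux

variable {p : ℕ} {K : Type*} [Field K] {Γ : Type*} [AddCommGroup Γ] [LinearOrder Γ] [IsOrderedAddMonoid Γ]
  {k : Type*} [Field k] {D : Type*} [AddCommGroup D]
  (P : PreDiffeoValuedS p K Γ k D)

lemma aux_v_one : P.v 1 = 0 := by
  have h := P.v_mul 1 1
  rw [one_mul] at h
  by_cases htop : P.v 1 = ⊤
  · exact absurd ((P.v_eq_top_iff 1).mp htop) one_ne_zero
  · obtain ⟨g, hg⟩ := WithTop.ne_top_iff_exists.mp htop
    rw [← hg, ← WithTop.coe_add] at h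
    have hgg : g = g + g := WithTop.coe_inj.mp h
    have hg0 : g = 0 := left_eq_add.mp hgg
    rw [← hg, hg0, WithTop.coe_zero]

lemma aux_v_neg_one : P.v (-1 : K) = 0 := by
  have h := P.v_mul (-1 : K) (-1 : K)
  rw [neg_one_mul, neg_neg, aux_v_one] at h
  by_cases htop : P.v (-1 : K) = ⊤
  · exact absurd ((P.v_eq_top_iff (-1 : K)).mp htop) (by norm_num)
  · obtain ⟨g, hg⟩ := WithTop.ne_top_iff_exists.mp htop
    rw [← hg, ← WithTop.coe_add, ← WithTop.coe_zero] at h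
    have hgg : g + g = 0 := (WithTop.coe_inj.mp h.symm)
    have hg0 : g = 0 := by
      rcases lt_trichotomy g 0 with hl | he | hgt
      · exact absurd hgg (ne_of_lt (add_neg_of_neg_of_nonpos hl (le_of_lt hl)))
      · exact he
      · exact absurd hgg (ne_of_gt (add_pos hgt hgt))
    rw [← hg, hg0, WithTop.coe_zero]

lemma aux_v_neg (x : K) : P.v (-x) = P.v x := by
  have h := P.v_mul (-1 : K) x
  rw [neg_one_mul, aux_v_neg_one, zero_add] at h
  exact h

lemma aux_d_zero : P.d 0 = 0 := by
  have h := P.d_add 0 (zero_mem P.R) 0 (zero_mem P.R)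
  rw [add_zero] at h
  exact left_eq_add.mp h

lemma aux_d_neg {x : K} (hx : x ∈ P.R) : P.d (-x) = -P.d x := by
  have h := P.d_add x hx (-x) (neg_mem hx)
  rw [add_neg_cancel, aux_d_zero] at h
  exact eq_neg_of_add_eq_zero_right h.symm

lemma aux_d_one : P.d 1 = 0 := by
  have h := P.d_leibniz 1 (one_mem P.R) 1 (one_mem P.R)
  rw [one_mul, P.res_one, one_mul] at h
  exact left_eq_add.mp h

lemma aux_Q_zero : (0 : K) ∈ P.Q := ⟨zero_mem P.R, aux_d_zero P⟩

lemma aux_Q_one : (1 : K) ∈ P.Q := ⟨one_mem P.R, aux_d_one P⟩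

lemma aux_Q_neg {x : K} (hx : x ∈ P.Q) : -x ∈ P.Q :=
  ⟨neg_mem hx.1, by rw [aux_d_neg P hx.1, hx.2, neg_zero]⟩

lemma aux_Q_add {x y : K} (hx : x ∈ P.Q) (hy : y ∈ P.Q) : x + y ∈ P.Q :=
  ⟨add_mem hx.1 hy.1, by rw [P.d_add x hx.1 y hy.1, hx.2, hy.2, add_zero]⟩

lemma aux_Q_mul {x y : K} (hx : x ∈ P.Q) (hy : y ∈ P.Q) : x * y ∈ P.Q :=
  ⟨mul_mem hx.1 hy.1,
    by rw [P.d_leibniz x hx.1 y hy.1, hx.2, hy.2, mul_zero, mul_zero, add_zero]⟩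

lemma aux_Q_mem_O {x : K} (hx : x ∈ P.Q) : x ∈ P.O := P.R_le_O hx.1

lemma aux_smul_zero {a : K} (ha : a ∈ P.O) : P.smul a 0 = 0 := by
  have h := P.smul_add a ha 0 0
  rw [add_zero] at h
  exact left_eq_add.mp h

lemma aux_zero_smul (y : D) : P.smul 0 y = 0 := by
  have h := P.add_smul 0 (zero_mem P.O) 0 (zero_mem P.O) y
  rw [add_zero] at h
  exact left_eq_add.mp h

lemma aux_neg_smul {a : K} (ha : a ∈ P.O) (y : D) : P.smul (-a) y = -P.smul a y := by
  have h := P.add_smul a ha (-a) (neg_mem ha) y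
  rw [add_neg_cancel, aux_zero_smul] at h
  exact eq_neg_of_add_eq_zero_right h.symm

lemma aux_sub_smul {a b : K} (ha : a ∈ P.O) (hb : b ∈ P.O) (y : D) :
    P.smul (a - b) y = P.smul a y - P.smul b y := by
  rw [sub_eq_add_neg, P.add_smul a ha (-b) (neg_mem hb) y, aux_neg_smul P hb,
    ← sub_eq_add_neg]

lemma aux_pi_zero : P.pi 0 = 0 := by
  have h := P.pi_add 0 (zero_mem P.O) 0 (zero_mem P.O)
  rw [add_zero] at h
  exact left_eq_add.mp h

lemma aux_pi_neg {x : K} (hx : x ∈ P.O) : P.pi (-x) = -P.pi x := by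
  have h := P.pi_add x hx (-x) (neg_mem hx)
  rw [add_neg_cancel, aux_pi_zero] at h
  exact eq_neg_of_add_eq_zero_right h.symm

lemma aux_pi_sub {x y : K} (hx : x ∈ P.O) (hy : y ∈ P.O) :
    P.pi (x - y) = P.pi x - P.pi y := by
  rw [sub_eq_add_neg, P.pi_add x hx (-y) (neg_mem hy), aux_pi_neg P hy, ← sub_eq_add_neg]

lemma aux_div_mem_O {x y : K} (hy : y ≠ 0) (hle : P.v y ≤ P.v x) :
    x * y⁻¹ ∈ P.O := by
  have hinv : P.v y + P.v y⁻¹ = 0 := by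
    rw [← P.v_mul, mul_inv_cancel₀ hy, aux_v_one]
  rw [P.mem_O_iff, ← hinv, P.v_mul]
  exact add_le_add_left hle _

lemma aux_pair (hdense : P.toPreDiffeoValued.IsDense) {b c : K}
    (hb : b ∈ P.O) (hc : c ∈ P.O) :
    ∃ q ∈ P.Q, b - q * c ∈ P.Q ∨ c - q * b ∈ P.Q := by
  suffices h : ∀ b c : K, b ∈ P.O → c ∈ P.O → ∀ a ∈ P.O,
      P.pi b = P.smul a (P.pi c) → ∃ q ∈ P.Q, b - q * c ∈ P.Q by
    rcases P.total (P.pi b) (P.pi c) with ⟨a, ha, hab⟩ | ⟨a, ha, hab⟩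
    · obtain ⟨q, hq, h'⟩ := h b c hb hc a ha hab
      exact ⟨q, hq, Or.inl h'⟩
    · obtain ⟨q, hq, h'⟩ := h c b hc hb a ha hab
      exact ⟨q, hq, Or.inr h'⟩
  intro b c hb hc a ha hab
  by_cases hc0 : P.pi c = 0
  · refine ⟨0, aux_Q_zero P, ?_⟩
    rw [zero_mul, sub_zero]
    have hb0 : P.pi b = 0 := by rw [hab, hc0, aux_smul_zero P ha]
    exact (P.pi_eq_zero_iff b hb).mp hb0
  · have hvt : P.val (P.pi c) ≠ ⊤ := fun h' => hc0 ((P.val_eq_top_iff _).mp h')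
    have hle : P.val (P.pi c) ≤ 0 := (P.val_nonpos_or_top _).resolve_right hvt
    obtain ⟨g, hg⟩ := WithTop.ne_top_iff_exists.mp hvt
    have hg0 : g ≤ 0 := by
      rw [← hg, ← WithTop.coe_zero, WithTop.coe_le_coe] at hle
      exact hle
    obtain ⟨q, hqQ, hlt⟩ := hdense a ha (-g)
    have haq : a - q ∈ P.O := by
      rw [P.mem_O_iff]
      refine le_of_lt (lt_of_le_of_lt ?_ hlt)
      rw [← WithTop.coe_zero, WithTop.coe_le_coe]
      exact neg_nonneg.mpr hg0
    have hpos : 0 < P.v (a - q) + P.val (P.pi c) := by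
      rw [← hg]
      by_cases htop : P.v (a - q) = ⊤
      · rw [htop, WithTop.top_add]
        rw [← WithTop.coe_zero]
        exact WithTop.coe_lt_top 0
      · obtain ⟨m, hm⟩ := WithTop.ne_top_iff_exists.mp htop
        rw [← hm] at hlt
        rw [WithTop.coe_lt_coe] at hlt
        rw [← hm, ← WithTop.coe_add, ← WithTop.coe_zero, WithTop.coe_lt_coe]
        exact neg_lt_iff_pos_add.mp hlt
    have hkill : P.smul (a - q) (P.pi c) = 0 :=
      (P.val_eq_top_iff _).mp (P.val_smul_of_pos (a - q) haq (P.pi c) hpos)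
    have heq : P.smul q (P.pi c) = P.pi b := by
      have h2 : P.smul a (P.pi c) - P.smul q (P.pi c) = 0 := by
        rw [← aux_sub_smul P ha (aux_Q_mem_O P hqQ)]
        exact hkill
      rw [hab]
      exact (sub_eq_zero.mp h2).symm
    refine ⟨q, hqQ, ?_⟩
    have hqc : q * c ∈ P.O := mul_mem (aux_Q_mem_O P hqQ) hc
    have hpi0 : P.pi (b - q * c) = 0 := by
      rw [aux_pi_sub P hb hqc, P.pi_qsmul q hqQ.1 hqQ.2 c hc, heq, sub_self]
    exact (P.pi_eq_zero_iff _ (sub_mem hb hqc)).mp hpi0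

lemma aux_triple (hdense : P.toPreDiffeoValued.IsDense) {y₁ y₂ y₃ : K}
    (h1 : y₁ ≠ 0) (hv2 : P.v y₁ ≤ P.v y₂) (hv3 : P.v y₁ ≤ P.v y₃) :
    (∃ a b : K, a ∈ P.Q ∧ b ∈ P.Q ∧ y₂ = a * y₃ + b * y₁) ∨
      (∃ a b : K, a ∈ P.Q ∧ b ∈ P.Q ∧ y₃ = a * y₂ + b * y₁) := by
  have hw2 : y₂ * y₁⁻¹ ∈ P.O := aux_div_mem_O P h1 hv2
  have hw3 : y₃ * y₁⁻¹ ∈ P.O := aux_div_mem_O P h1 hv3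
  obtain ⟨q, hq, hcase⟩ := aux_pair P hdense hw2 hw3
  rcases hcase with h | h
  · left
    refine ⟨q, y₂ * y₁⁻¹ - q * (y₃ * y₁⁻¹), hq, h, ?_⟩
    field_simp
    ring
  · right
    refine ⟨q, y₃ * y₁⁻¹ - q * (y₂ * y₁⁻¹), hq, h, ?_⟩
    field_simp
    ring

end Aux

/-- Assume the pre-diffeo-valued field structure is dense, and set
`I := Q ∩ M`.  Then the lattice of `Q`-submodules of `K` has cube rank exactly `2`:
(i) for `Q`-submodules `A ⊊ B₁, B₂, B₃` of `K`, some `Bᵢ ∩ (Bⱼ + Bₗ) ≠ A`; and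
(ii) there are `Q`-submodules `N₁, N₂` with `N₁ ∩ N₂ = I`, `N₁ + N₂ = R`,
`I ≠ N₁ ≠ R` and `I ≠ N₂ ≠ R`. -/
theorem cubeRank_Q_submodules_eq_two
    {p : ℕ} (hp : p.Prime) {K : Type*} [Field K] [CharP K p]
    {Γ : Type*} [AddCommGroup Γ] [LinearOrder Γ] [IsOrderedAddMonoid Γ]
    {k : Type*} [Field k] {D : Type*} [AddCommGroup D]
    (P : PreDiffeoValuedS p K Γ k D)
    (hdense : P.toPreDiffeoValued.IsDense) :
    -- (i) no strict 3-cube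
    (∀ A B₁ B₂ B₃ : Set K,
      IsQSubmodule P.Q A → IsQSubmodule P.Q B₁ → IsQSubmodule P.Q B₂ →
        IsQSubmodule P.Q B₃ →
      A ⊆ B₁ → A ≠ B₁ → A ⊆ B₂ → A ≠ B₂ → A ⊆ B₃ → A ≠ B₃ →
      (B₁ ∩ (B₂ + B₃) ≠ A ∨ B₂ ∩ (B₁ + B₃) ≠ A ∨ B₃ ∩ (B₁ + B₂) ≠ A)) ∧
    -- (ii) a strict 2-cube between `I = Q ∩ M` and `R`
    (∃ N₁ N₂ : Set K, IsQSubmodule P.Q N₁ ∧ IsQSubmodule P.Q N₂ ∧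
      N₁ ∩ N₂ = P.Q ∩ {x : K | 0 < P.v x} ∧
      N₁ + N₂ = (P.R : Set K) ∧
      N₁ ≠ P.Q ∩ {x : K | 0 < P.v x} ∧ N₁ ≠ (P.R : Set K) ∧
      N₂ ≠ P.Q ∩ {x : K | 0 < P.v x} ∧ N₂ ≠ (P.R : Set K)) := by
  constructor
  · -- part (i)
    intro A B₁ B₂ B₃ hA hB₁ hB₂ hB₃ s1 n1 s2 n2 s3 n3
    obtain ⟨x₁, hx₁B, hx₁A⟩ := Set.exists_of_ssubset (HasSubset.Subset.ssubset_of_ne s1 n1)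
    obtain ⟨x₂, hx₂B, hx₂A⟩ := Set.exists_of_ssubset (HasSubset.Subset.ssubset_of_ne s2 n2)
    obtain ⟨x₃, hx₃B, hx₃A⟩ := Set.exists_of_ssubset (HasSubset.Subset.ssubset_of_ne s3 n3)
    have hx₁0 : x₁ ≠ 0 := fun h => hx₁A (h ▸ hA.1)
    have hx₂0 : x₂ ≠ 0 := fun h => hx₂A (h ▸ hA.1)
    have hx₃0 : x₃ ≠ 0 := fun h => hx₃A (h ▸ hA.1)
    have final : ∀ {X Y Z : Set K}, IsQSubmodule P.Q Y → IsQSubmodule P.Q Z →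
        ∀ {xi yj zl a b : K}, xi ∈ X → xi ∉ A → yj ∈ Y → zl ∈ Z → a ∈ P.Q → b ∈ P.Q →
        xi = a * yj + b * zl → X ∩ (Y + Z) ≠ A := by
      intro X Y Z hY hZ xi yj zl a b hxi hxiA hyj hzl ha hb heq hEq
      apply hxiA
      rw [← hEq]
      exact ⟨hxi, Set.mem_add.mpr ⟨a * yj, hY.2.2.2 a ha yj hyj,
        b * zl, hZ.2.2.2 b hb zl hzl, heq.symm⟩⟩
    rcases le_total (P.v x₁) (P.v x₂) with h12 | h21
    · rcases le_total (P.v x₁) (P.v x₃) with h13 | h31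
      · -- x₁ minimal
        rcases aux_triple P hdense hx₁0 h12 h13 with ⟨a, b, ha, hb, heq⟩ | ⟨a, b, ha, hb, heq⟩
        · exact Or.inr (Or.inl (final hB₁ hB₃ hx₂B hx₂A hx₁B hx₃B hb ha
            (by rw [heq]; ring)))
        · exact Or.inr (Or.inr (final hB₁ hB₂ hx₃B hx₃A hx₁B hx₂B hb ha
            (by rw [heq]; ring)))
      · -- x₃ minimal
        rcases aux_triple P hdense hx₃0 h31 (le_trans h31 h12) with
          ⟨a, b, ha, hb, heq⟩ | ⟨a, b, ha, hb, heq⟩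
        · exact Or.inl (final hB₂ hB₃ hx₁B hx₁A hx₂B hx₃B ha hb heq)
        · exact Or.inr (Or.inl (final hB₁ hB₃ hx₂B hx₂A hx₁B hx₃B ha hb heq))
    · rcases le_total (P.v x₂) (P.v x₃) with h23 | h32
      · -- x₂ minimal
        rcases aux_triple P hdense hx₂0 h21 h23 with ⟨a, b, ha, hb, heq⟩ | ⟨a, b, ha, hb, heq⟩
        · exact Or.inl (final hB₂ hB₃ hx₁B hx₁A hx₂B hx₃B hb ha
            (by rw [heq]; ring))
        · exact Or.inr (Or.inr (final hB₁ hB₂ hx₃B hx₃A hx₁B hx₂B ha hb heq))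
      · -- x₃ minimal
        rcases aux_triple P hdense hx₃0 (le_trans h32 h21) h32 with
          ⟨a, b, ha, hb, heq⟩ | ⟨a, b, ha, hb, heq⟩
        · exact Or.inl (final hB₂ hB₃ hx₁B hx₁A hx₂B hx₃B ha hb heq)
        · exact Or.inr (Or.inl (final hB₁ hB₃ hx₂B hx₂A hx₁B hx₃B ha hb heq))
  · -- part (ii)
    refine ⟨P.Q, (P.R : Set K) ∩ {x : K | 0 < P.v x}, ?_, ?_, ?_, ?_, ?_, ?_, ?_, ?_⟩
    · exact ⟨aux_Q_zero P, fun x hx y hy => aux_Q_add P hx hy,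
        fun x hx => aux_Q_neg P hx, fun q hq x hx => aux_Q_mul P hq hx⟩
    · refine ⟨⟨zero_mem P.R, ?_⟩, ?_, ?_, ?_⟩
      · show (0 : WithTop Γ) < P.v 0
        rw [(P.v_eq_top_iff 0).mpr rfl, ← WithTop.coe_zero]
        exact WithTop.coe_lt_top 0
      · intro x hx y hy
        exact ⟨add_mem hx.1 hy.1, lt_of_lt_of_le (lt_min hx.2 hy.2) (P.v_add x y)⟩
      · intro x hx
        refine ⟨neg_mem hx.1, ?_⟩
        show (0 : WithTop Γ) < P.v (-x)
        rw [aux_v_neg]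
        exact hx.2
      · intro q hq x hx
        refine ⟨mul_mem hq.1 hx.1, ?_⟩
        show (0 : WithTop Γ) < P.v (q * x)
        rw [P.v_mul]
        have h0q : (0 : WithTop Γ) ≤ P.v q := (P.mem_O_iff q).mp (aux_Q_mem_O P hq)
        calc (0 : WithTop Γ) < P.v x := hx.2
          _ = 0 + P.v x := (zero_add _).symm
          _ ≤ P.v q + P.v x := add_le_add_left h0q _
    · ext x
      exact ⟨fun h => ⟨h.1, h.2.2⟩, fun h => ⟨h.1, h.1.1, h.2⟩⟩
    · apply Set.Subset.antisymm
      · intro x hx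
        obtain ⟨u, hu, w, hw, huw⟩ := Set.mem_add.mp hx
        rw [← huw]
        exact add_mem hu.1 hw.1
      · intro x hx
        have hxR : x ∈ P.R := hx
        obtain ⟨q, hq, hv⟩ := hdense x (P.R_le_O hxR) 0
        refine Set.mem_add.mpr ⟨q, hq, x - q, ⟨sub_mem hxR hq.1, ?_⟩, by ring⟩
        show (0 : WithTop Γ) < P.v (x - q)
        rw [← WithTop.coe_zero]
        exact hv
    · intro h
      have h1 : (1 : K) ∈ P.Q ∩ {x : K | 0 < P.v x} := h ▸ aux_Q_one P
      have := h1.2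
      rw [Set.mem_setOf_eq, aux_v_one] at this
      exact lt_irrefl _ this
    · intro h
      obtain ⟨x₀, hx₀R, hdx₀⟩ := P.d_surjective 1
      have hx₀Q : x₀ ∈ P.Q := by rw [h]; exact hx₀R
      rw [hx₀Q.2] at hdx₀
      exact one_ne_zero hdx₀.symm
    · intro h
      obtain ⟨x₀, hx₀R, hdx₀⟩ := P.d_surjective 1
      obtain ⟨q, hqQ, hv⟩ := hdense x₀ (P.R_le_O hx₀R) 0
      have hmem : x₀ - q ∈ (P.R : Set K) ∩ {x : K | 0 < P.v x} := by
        refine ⟨sub_mem hx₀R hqQ.1, ?_⟩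
        show (0 : WithTop Γ) < P.v (x₀ - q)
        rw [← WithTop.coe_zero]
        exact hv
      rw [h] at hmem
      have hd : P.d (x₀ - q) = 0 := hmem.1.2
      rw [sub_eq_add_neg, P.d_add x₀ hx₀R (-q) (neg_mem hqQ.1), aux_d_neg P hqQ.1,
        hqQ.2, neg_zero, add_zero, hdx₀] at hd
      exact one_ne_zero hd
    · intro h
      have h1 : (1 : K) ∈ (P.R : Set K) ∩ {x : K | 0 < P.v x} := by
        rw [h]; exact one_mem P.R
      have := h1.2
      rw [Set.mem_setOf_eq, aux_v_one] at this
      exact lt_irrefl _ this
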